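/- Let N ≥ 2, let δ ∈ (0,1), and let K ⊆ {0,…,N−1} be a nonempty finite set that is δ-collision-resistant, i.e., |(1/|K|)·Σ_{k∈K} cos(2π k a / N)| < δ for every integer a ≢ 0 (mod N). Let f be a Boolean function of n₁ + n₂ variables with a characteristic polynomial g over ℤ_N that decomposes as g(x, y) = g₁(x) + g₂(y), where g₁ depends only on the first n₁ variables and g₂ only on the last n₂ variables. Then for all σ ∈ {0,1}^{n₁} and γ ∈ {0,1}^{n₂}: (i) if f(σ, γ) = 1, then the hash vectors coincide, h_K(g₁(σ)) = h_K(−g₂(γ)); and (ii) if f(σ, γ) = 0, then |⟨h_K(g₁(σ)), h_K(−g₂(γ))⟩| < δ. -/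

import Mathlib

open Real
open scoped RealInnerProductSpace

/-- The quantum hash of an integer `M` for a finite parameter set `K ⊆ ℕ` and
modulus `N`: the vector in `ℝ^{2|K|}` (indexed by pairs `(k, b)` with `k ∈ K`
and `b : Bool`) whose `(k, false)`-component is `(1/√|K|)·cos(2π k M / N)` and
whose `(k, true)`-component is `(1/√|K|)·sin(2π k M / N)`. -/
noncomputable def quantumHash (N : ℕ) (K : Finset ℕ) (M : ℤ) :
    EuclideanSpace ℝ (↥K × Bool) := WithLp.toLp 2 fun p =>
  (1 / Real.sqrt K.card) *
    (if p.2 then Real.sin (2 * π * ((p.1 : ℕ) : ℝ) * (M : ℝ) / (N : ℝ))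
     else Real.cos (2 * π * ((p.1 : ℕ) : ℝ) * (M : ℝ) / (N : ℝ)))

/-- **Correctness of the one-way quantum communication protocol (Theorem 1).**
Let `N ≥ 2`, `δ ∈ (0,1)`, and let `K ⊆ {0,…,N−1}` be nonempty and
δ-collision-resistant. Let `f` be a Boolean function of `n₁ + n₂` variables
with a characteristic polynomial over `ℤ_N` that decomposes as
`g(x,y) = g₁(x) + g₂(y)`. Then for all inputs `σ, γ`:
(i) if `f(σ,γ) = 1` then `h_K(g₁(σ)) = h_K(−g₂(γ))`, and
(ii) if `f(σ,γ) = 0` then `|⟨h_K(g₁(σ)), h_K(−g₂(γ))⟩| < δ`. -/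
theorem quantum_communication_protocol_correctness
    (N : ℕ) (hN : 2 ≤ N) (δ : ℝ) (hδ : δ ∈ Set.Ioo (0 : ℝ) 1)
    (K : Finset ℕ) (hKne : K.Nonempty) (hKlt : ∀ k ∈ K, k < N)
    (hres : ∀ a : ℤ, ¬ ((N : ℤ) ∣ a) →
      |(1 / (K.card : ℝ)) *
          ∑ k ∈ K, Real.cos (2 * π * (k : ℝ) * (a : ℝ) / (N : ℝ))| < δ)
    (n₁ n₂ : ℕ) (f : (Fin n₁ → Bool) → (Fin n₂ → Bool) → Bool)
    (g₁ : MvPolynomial (Fin n₁) (ZMod N)) (g₂ : MvPolynomial (Fin n₂) (ZMod N))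
    (hchar : ∀ (σ : Fin n₁ → Bool) (γ : Fin n₂ → Bool),
      MvPolynomial.eval (fun i => if σ i then (1 : ZMod N) else 0) g₁
          + MvPolynomial.eval (fun j => if γ j then (1 : ZMod N) else 0) g₂ = 0
        ↔ f σ γ = true) :
    ∀ (σ : Fin n₁ → Bool) (γ : Fin n₂ → Bool),
      (f σ γ = true →
        quantumHash N K
            ((MvPolynomial.eval (fun i => if σ i then (1 : ZMod N) else 0) g₁).val : ℤ)
          = quantumHash N K
            (((- MvPolynomial.eval (fun j => if γ j then (1 : ZMod N) else 0) g₂)).val : ℤ))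
      ∧ (f σ γ = false →
          |⟪quantumHash N K
              ((MvPolynomial.eval (fun i => if σ i then (1 : ZMod N) else 0) g₁).val : ℤ),
            quantumHash N K
              (((- MvPolynomial.eval (fun j => if γ j then (1 : ZMod N) else 0) g₂)).val : ℤ)⟫|
            < δ) := by
  have hNe : NeZero N := ⟨by omega⟩
  intro σ γ
  set a : ZMod N := MvPolynomial.eval (fun i => if σ i then (1 : ZMod N) else 0) g₁ with ha
  set b : ZMod N := MvPolynomial.eval (fun j => if γ j then (1 : ZMod N) else 0) g₂ with hb
  constructor
  · intro hf
    have h0 : a + b = 0 := (hchar σ γ).2 hf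
    have : a = -b := by linear_combination h0
    rw [this]
  · intro hf
    have hne : a + b ≠ 0 := fun h => by simp [(hchar σ γ).1 h] at hf
    have hane : a ≠ -b := fun h => hne (by rw [h]; ring)
    have hd : (0 : ℝ) < (K.card : ℝ) := by exact_mod_cast Finset.card_pos.2 hKne
    have hNR : (0 : ℝ) < (N : ℝ) := by positivity
    set M : ℤ := (a.val : ℤ) with hM
    set M' : ℤ := ((-b).val : ℤ) with hM'
    have hinner : ⟪quantumHash N K M, quantumHash N K M'⟫ =
        (1 / (K.card : ℝ)) *
          ∑ k ∈ K, Real.cos (2 * π * (k : ℝ) * (((M - M' : ℤ) : ℝ)) / (N : ℝ)) := by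
      rw [PiLp.inner_apply]
      simp only [RCLike.inner_apply, conj_trivial, Fintype.sum_prod_type, Fintype.sum_bool]
      rw [Finset.mul_sum, ← Finset.sum_coe_sort K
        (fun k => (1 / (K.card : ℝ)) * Real.cos (2 * π * (k : ℝ) * (((M - M' : ℤ) : ℝ)) / (N : ℝ)))]
      refine Finset.sum_congr rfl fun k _ => ?_
      simp only [quantumHash]
      norm_num
      have hsq : 1 / Real.sqrt (K.card : ℝ) * (1 / Real.sqrt (K.card : ℝ))
          = 1 / (K.card : ℝ) := by
        rw [div_mul_div_comm, Real.mul_self_sqrt hd.le, one_mul]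
      have hcos : Real.cos (2 * π * ((k : ℕ) : ℝ) * ((M : ℝ) - (M' : ℝ)) / (N : ℝ))
          = Real.cos (2 * π * ((k : ℕ) : ℝ) * (M : ℝ) / (N : ℝ))
              * Real.cos (2 * π * ((k : ℕ) : ℝ) * (M' : ℝ) / (N : ℝ))
            + Real.sin (2 * π * ((k : ℕ) : ℝ) * (M : ℝ) / (N : ℝ))
              * Real.sin (2 * π * ((k : ℕ) : ℝ) * (M' : ℝ) / (N : ℝ)) := by
        rw [← Real.cos_sub]
        congr 1
        field_simp
      rw [hcos]
      linear_combination (Real.cos (2 * π * ((k : ℕ) : ℝ) * (M : ℝ) / (N : ℝ))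
          * Real.cos (2 * π * ((k : ℕ) : ℝ) * (M' : ℝ) / (N : ℝ))
        + Real.sin (2 * π * ((k : ℕ) : ℝ) * (M : ℝ) / (N : ℝ))
          * Real.sin (2 * π * ((k : ℕ) : ℝ) * (M' : ℝ) / (N : ℝ))) * hsq
    rw [hinner]
    apply hres
    intro hdvd
    apply hane
    have h0 : ((M - M' : ℤ) : ZMod N) = 0 := (ZMod.intCast_zmod_eq_zero_iff_dvd _ _).2 hdvd
    have h1 : ((M : ℤ) : ZMod N) = ((M' : ℤ) : ZMod N) := by
      push_cast at h0
      exact sub_eq_zero.mp h0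
    simpa [hM, hM', ZMod.natCast_val, ZMod.cast_id] using h1
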